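/- Let Δ ⊂ ℝ^ℓ be a compact convex polytope, p : Δ → ℝ a continuous positive function on the interior, and H : Δ → Sym²(ℝ^ℓ) a continuous map with H(z) positive semidefinite for all z and positive definite for z in the interior of Δ. Then for every convex C² function f on Δ, ∫_Δ ⟨H(z), Hess f(z)⟩ p(z) dz ≥ 0, with equality if and only if f is affine on Δ. -/

import Mathlib

open MeasureTheory

section MatrixAux
open Matrix

lemma pair_expand {n : ℕ} (M B : Matrix (Fin n) (Fin n) ℝ) (hB : ∀ r s, B r s = B s r) :
    ∑ r, ∑ s, M r s * (B * B) r s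
      = ∑ k, dotProduct (fun j => B k j) (M *ᵥ (fun j => B k j)) := by
  simp only [Matrix.mul_apply, dotProduct, Matrix.mulVec, Finset.mul_sum]
  have h1 : ∀ r : Fin n, ∑ s, ∑ j, M r s * (B r j * B j s)
      = ∑ j, ∑ s, M r s * (B r j * B j s) := fun r => Finset.sum_comm
  simp only [h1]
  rw [Finset.sum_comm]
  refine Finset.sum_congr rfl fun j _ => Finset.sum_congr rfl fun r _ =>
    Finset.sum_congr rfl fun s _ => ?_
  rw [hB r j]; ring

open scoped MatrixOrder in
lemma psd_sqrt_exists {n : ℕ} {A : Matrix (Fin n) (Fin n) ℝ} (hA : A.PosSemidef) :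
    ∃ B : Matrix (Fin n) (Fin n) ℝ, (∀ r s, B r s = B s r) ∧ B * B = A := by
  refine ⟨CFC.sqrt A, fun r s => ?_, CFC.sqrt_mul_sqrt_self A hA.nonneg⟩
  have h := (Matrix.nonneg_iff_posSemidef.1 (CFC.sqrt_nonneg A)).1
  conv_rhs => rw [← h]
  simp [Matrix.conjTranspose_apply]

lemma pair_nonneg {n : ℕ} {M A : Matrix (Fin n) (Fin n) ℝ} (hM : M.PosSemidef)
    (hA : A.PosSemidef) : 0 ≤ ∑ r, ∑ s, M r s * A r s := by
  obtain ⟨S, hsym, hSS⟩ := psd_sqrt_exists hA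
  rw [← hSS, pair_expand M _ hsym]
  refine Finset.sum_nonneg fun k _ => ?_
  simpa using hM.dotProduct_mulVec_nonneg (fun j => S k j)

lemma pair_eq_zero {n : ℕ} {M A : Matrix (Fin n) (Fin n) ℝ} (hM : M.PosDef)
    (hA : A.PosSemidef) (h : ∑ r, ∑ s, M r s * A r s = 0) : A = 0 := by
  obtain ⟨S, hsym, hSS⟩ := psd_sqrt_exists hA
  rw [← hSS, pair_expand M _ hsym] at h
  have hzero : ∀ k, dotProduct (fun j => S k j) (M *ᵥ (fun j => S k j)) = 0 := by
    have := (Finset.sum_eq_zero_iff_of_nonneg (fun k _ => by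
      simpa using hM.posSemidef.dotProduct_mulVec_nonneg (fun j => S k j))).1 h
    exact fun k => this k (Finset.mem_univ k)
  have hrow : ∀ k, (fun j => S k j) = 0 := by
    intro k
    by_contra hne
    have := hM.dotProduct_mulVec_pos (x := fun j => S k j) hne
    rw [show star (fun j => S k j) = (fun j => S k j) from by
      funext j; simp] at this
    exact absurd (hzero k) (ne_of_gt this)
  have hB : S = 0 := by
    ext r s
    exact congrFun (hrow r) s
  rw [← hSS, hB, Matrix.zero_mul]

end MatrixAux
lemma clm2_expand {n : ℕ} (B : (Fin n → ℝ) →L[ℝ] (Fin n → ℝ) →L[ℝ] ℝ) (x y : Fin n → ℝ) :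
    B x y = ∑ r, ∑ s, x r * y s * B (Pi.single r 1) (Pi.single s 1) := by
  have hx : ∀ v : Fin n → ℝ, v = ∑ r, v r • (Pi.single r 1 : Fin n → ℝ) := by
    intro v
    conv_lhs => rw [← Finset.univ_sum_single v]
    refine Finset.sum_congr rfl fun r _ => ?_
    funext j
    by_cases h : j = r <;> simp [Pi.single_apply, h]
  conv_lhs => rw [hx x, hx y]
  rw [map_sum]
  simp only [_root_.map_smul, ContinuousLinearMap.coe_sum', Finset.sum_apply,
    ContinuousLinearMap.coe_smul', Pi.smul_apply, map_sum, _root_.map_smul, smul_eq_mul,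
    Finset.mul_sum]
  rw [Finset.sum_comm]
  exact Finset.sum_congr rfl fun r _ => Finset.sum_congr rfl fun s _ => by ring

lemma hess_nonneg {n : ℕ} {Δ : Set (Fin n → ℝ)} (hΔconv : Convex ℝ Δ)
    {f : (Fin n → ℝ) → ℝ} (hf : ContDiff ℝ 2 f) (hconv : ConvexOn ℝ Δ f)
    {z : Fin n → ℝ} (hz : z ∈ interior Δ) (v : Fin n → ℝ) :
    0 ≤ fderiv ℝ (fderiv ℝ f) z v v := by
  classical
  set line : ℝ → (Fin n → ℝ) := fun t => t • v + z with hline_def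
  have hline : ∀ t : ℝ, HasDerivAt line v t := by
    intro t
    simpa [hline_def] using ((hasDerivAt_id t).smul_const v).add_const z
  have hdf : Differentiable ℝ f := hf.differentiable (by norm_num)
  have hdF : Differentiable ℝ (fderiv ℝ f) :=
    (hf.fderiv_right (m := 1) (by norm_num)).differentiable (by norm_num)
  set g : ℝ → ℝ := fun t => f (line t) with hg_def
  set g' : ℝ → ℝ := fun t => fderiv ℝ f (line t) v with hg'_def
  have hg' : ∀ t, HasDerivAt g (g' t) t := fun t =>
    ((hdf (line t)).hasFDerivAt).comp_hasDerivAt t (hline t)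
  have hline0 : line 0 = z := by simp [hline_def]
  have hg'' : HasDerivAt g' (fderiv ℝ (fderiv ℝ f) z v v) 0 := by
    have h1 : HasDerivAt (fun t => fderiv ℝ f (line t)) (fderiv ℝ (fderiv ℝ f) z v) 0 := by
      have hd : HasFDerivAt (fderiv ℝ f) (fderiv ℝ (fderiv ℝ f) z) (line 0) := by
        rw [hline0]; exact (hdF z).hasFDerivAt
      exact hd.comp_hasDerivAt 0 (hline 0)
    have h2 := ((ContinuousLinearMap.apply ℝ ℝ v).hasFDerivAt).comp_hasDerivAt 0 h1
    exact h2
  set T : Set ℝ := line ⁻¹' Δ with hT_def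
  have haff : ⇑(AffineMap.lineMap z (z + v) : ℝ →ᵃ[ℝ] (Fin n → ℝ)) = line := by
    funext t
    simp [AffineMap.lineMap_apply, hline_def, add_comm]
  have hgT : ConvexOn ℝ T g := by
    have := hconv.comp_affineMap (AffineMap.lineMap z (z + v))
    rwa [haff] at this
  have hmono : MonotoneOn (deriv g) T :=
    hgT.monotoneOn_deriv (fun x _ => (hg' x).differentiableAt)
  have hderiv_eq : ∀ t, deriv g t = g' t := fun t => (hg' t).deriv
  have h0T : (0 : ℝ) ∈ T := by
    simp only [hT_def, Set.mem_preimage, hline0]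
    exact interior_subset hz
  obtain ⟨ε, hε, hball⟩ : ∃ ε : ℝ, 0 < ε ∧ Metric.ball (0 : ℝ) ε ⊆ T := by
    have hTn : T ∈ nhds (0 : ℝ) := by
      have hcont : Continuous line := (continuous_id.smul continuous_const).add continuous_const
      have hmem : Δ ∈ nhds z :=
        Filter.mem_of_superset (isOpen_interior.mem_nhds hz) interior_subset
      have := hcont.continuousAt (x := (0 : ℝ)).preimage_mem_nhds (by rwa [hline0])
      exact this
    rcases Metric.mem_nhds_iff.1 hTn with ⟨ε, hε, hsub⟩
    exact ⟨ε, hε, hsub⟩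
  have hslope : ∀ t ∈ Set.Ioo (0 : ℝ) ε, 0 ≤ slope g' 0 t := by
    intro t ht
    have htT : t ∈ T := hball (by
      simp only [Metric.mem_ball, Real.dist_eq, sub_zero]
      rw [abs_of_pos ht.1]; exact ht.2)
    have hle : deriv g 0 ≤ deriv g t := hmono h0T htT ht.1.le
    rw [hderiv_eq, hderiv_eq] at hle
    rw [slope_def_field, div_eq_mul_inv]
    have := inv_nonneg.2 (sub_nonneg.2 ht.1.le)
    apply mul_nonneg (by linarith)
    simp [inv_nonneg, ht.1.le]
  have htend : Filter.Tendsto (slope g' 0) (nhdsWithin 0 (Set.Ioi 0))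
      (nhds (fderiv ℝ (fderiv ℝ f) z v v)) := by
    have := hasDerivAt_iff_tendsto_slope.1 hg''
    exact this.mono_left (nhdsWithin_mono 0 (fun t ht => ne_of_gt ht))
  refine ge_of_tendsto htend ?_
  filter_upwards [Ioo_mem_nhdsGT_of_mem (Set.left_mem_Ico.2 hε)] with t ht
  exact hslope t ht

lemma mem_closure_interior_of_convex {E : Type*} [NormedAddCommGroup E] [NormedSpace ℝ E]
    {s : Set E} (hs : Convex ℝ s) {y : E} (hy : y ∈ interior s) {x : E} (hx : x ∈ s) :
    x ∈ closure (interior s) := by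
  have htend : Filter.Tendsto (fun n : ℕ => x + (1 / (n + 1) : ℝ) • (y - x)) Filter.atTop (nhds x) := by
    have h0 : Filter.Tendsto (fun n : ℕ => (1 / (n + 1) : ℝ)) Filter.atTop (nhds 0) :=
      tendsto_one_div_add_atTop_nhds_zero_nat
    have := (h0.smul_const (y - x)).const_add x
    simpa using this
  refine mem_closure_of_tendsto htend (Filter.Eventually.of_forall fun n => ?_)
  refine hs.add_smul_sub_mem_interior hx hy ⟨?_, ?_⟩
  · positivity
  · rw [div_le_one (by positivity)]
    simp [le_add_iff_nonneg_left]


/-- Let `Δ ⊂ ℝ^ℓ` be a compact convex body, `p` continuous on `Δ` and positive on its interior,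
and `H` a continuous field of symmetric matrices, positive semidefinite on `Δ` and positive
definite on the interior.  Then for every convex `C²` function `f`,
`∫_Δ ⟨H, Hess f⟩ p ≥ 0`, with equality iff `f` is affine on `Δ`. -/
theorem stmt_3 {ℓ : ℕ} (Δ : Set (Fin ℓ → ℝ)) (hΔc : IsCompact Δ) (hΔconv : Convex ℝ Δ)
    (hΔint : (interior Δ).Nonempty)
    (p : (Fin ℓ → ℝ) → ℝ) (hp : ContinuousOn p Δ) (hppos : ∀ z ∈ interior Δ, 0 < p z)
    (H : (Fin ℓ → ℝ) → Matrix (Fin ℓ) (Fin ℓ) ℝ) (hHc : ContinuousOn H Δ)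
    (hHsymm : ∀ z ∈ Δ, (H z).IsSymm)
    (hHpsd : ∀ z ∈ Δ, (H z).PosSemidef)
    (hHpd : ∀ z ∈ interior Δ, (H z).PosDef)
    (f : (Fin ℓ → ℝ) → ℝ) (hf : ContDiff ℝ 2 f) (hconv : ConvexOn ℝ Δ f) :
    0 ≤ (∫ z in Δ, (∑ r, ∑ s, H z r s *
        fderiv ℝ (fun w => fderiv ℝ f w (Pi.single s 1)) z (Pi.single r 1)) * p z) ∧
      ((∫ z in Δ, (∑ r, ∑ s, H z r s *
          fderiv ℝ (fun w => fderiv ℝ f w (Pi.single s 1)) z (Pi.single r 1)) * p z) = 0 ↔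
        ∃ g : (Fin ℓ → ℝ) →ᵃ[ℝ] ℝ, ∀ z ∈ Δ, f z = g z) := by
  classical
  have hdf : Differentiable ℝ f := hf.differentiable (by norm_num)
  have hF1 : ContDiff ℝ 1 (fderiv ℝ f) := hf.fderiv_right (m := 1) (by norm_num)
  have hdF : Differentiable ℝ (fderiv ℝ f) := hF1.differentiable (by norm_num)
  have hcont2 : Continuous (fderiv ℝ (fderiv ℝ f)) := hF1.continuous_fderiv (by norm_num)
  have hD2 : ∀ (z : Fin ℓ → ℝ) (r s : Fin ℓ),
      fderiv ℝ (fun w => fderiv ℝ f w (Pi.single s 1)) z (Pi.single r 1)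
        = fderiv ℝ (fderiv ℝ f) z (Pi.single r 1) (Pi.single s 1) := by
    intro z r s
    rw [fderiv_clm_apply (hdF z) (differentiableAt_const _)]
    simp
  simp only [hD2]
  set A : (Fin ℓ → ℝ) → Matrix (Fin ℓ) (Fin ℓ) ℝ :=
    fun z => Matrix.of fun r s => fderiv ℝ (fderiv ℝ f) z (Pi.single r 1) (Pi.single s 1)
    with hA_def
  set φ : (Fin ℓ → ℝ) → ℝ :=
    fun z => (∑ r, ∑ s, H z r s * fderiv ℝ (fderiv ℝ f) z (Pi.single r 1) (Pi.single s 1)) * p z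
    with hφ_def
  have hAentry : ∀ z r s, A z r s = fderiv ℝ (fderiv ℝ f) z (Pi.single r 1) (Pi.single s 1) :=
    fun _ _ _ => rfl
  -- PSD of the Hessian matrix on the interior
  have hApsd : ∀ z ∈ interior Δ, (A z).PosSemidef := by
    intro z hz
    refine Matrix.PosSemidef.of_dotProduct_mulVec_nonneg ?_ ?_
    · have hsymm2 := (hf.contDiffAt (x := z)).isSymmSndFDerivAt (by simp)
      ext r s
      simp only [Matrix.conjTranspose_apply, hAentry, star_trivial]
      exact hsymm2.eq _ _
    · intro x
      have hnn := hess_nonneg hΔconv hf hconv hz x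
      have hexp : dotProduct (star x) (Matrix.mulVec (A z) x)
          = fderiv ℝ (fderiv ℝ f) z x x := by
        rw [clm2_expand (fderiv ℝ (fderiv ℝ f) z) x x]
        simp only [dotProduct, Matrix.mulVec, star_trivial, Finset.mul_sum]
        exact Finset.sum_congr rfl fun r _ => Finset.sum_congr rfl fun s _ => by
          rw [hAentry]; ring
      rw [hexp]; exact hnn
  -- measure-theoretic preliminaries
  have hΔmeas : MeasurableSet Δ := hΔc.isClosed.measurableSet
  have hfront : volume (frontier Δ) = 0 := hΔconv.addHaar_frontier volume
  have hae_int : ∀ᵐ z ∂(volume.restrict Δ), z ∈ interior Δ := by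
    have h1 : ∀ᵐ z ∂(volume.restrict Δ), z ∉ frontier Δ :=
      ae_restrict_of_ae (measure_eq_zero_iff_ae_notMem.1 hfront)
    filter_upwards [h1, ae_restrict_mem hΔmeas] with z hznf hzΔ
    by_contra hni
    exact hznf (by rw [← closure_diff_interior]; exact ⟨subset_closure hzΔ, hni⟩)
  have hφ_nonneg : ∀ z ∈ interior Δ, 0 ≤ φ z := by
    intro z hz
    refine mul_nonneg ?_ (hppos z hz).le
    exact pair_nonneg (hHpsd z (interior_subset hz)) (hApsd z hz)
  have hφae : 0 ≤ᵐ[volume.restrict Δ] φ := by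
    filter_upwards [hae_int] with z hz using hφ_nonneg z hz
  -- continuity and integrability
  have hAcont : ∀ r s : Fin ℓ, Continuous fun z => A z r s := by
    intro r s
    have h1 : Continuous fun z => fderiv ℝ (fderiv ℝ f) z (Pi.single r 1) :=
      ((ContinuousLinearMap.apply ℝ ((Fin ℓ → ℝ) →L[ℝ] ℝ) (Pi.single r 1)).continuous).comp hcont2
    exact ((ContinuousLinearMap.apply ℝ ℝ (Pi.single s 1)).continuous).comp h1
  have hφcont : ContinuousOn φ Δ := by
    refine ContinuousOn.mul ?_ hp
    refine continuousOn_finset_sum _ fun r _ => continuousOn_finset_sum _ fun s _ => ?_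
    refine ContinuousOn.mul ?_ (hAcont r s).continuousOn
    have helem : Continuous fun M : Matrix (Fin ℓ) (Fin ℓ) ℝ => M r s :=
      (continuous_apply s).comp (continuous_apply r)
    exact helem.comp_continuousOn hHc
  have hφint : IntegrableOn φ Δ := hφcont.integrableOn_compact hΔc
  have hnonneg : 0 ≤ ∫ z in Δ, φ z := integral_nonneg_of_ae hφae
  refine ⟨hnonneg, ?_, ?_⟩
  · -- equality implies affine
    intro h0
    have hae0 : φ =ᵐ[volume.restrict Δ] 0 := (integral_eq_zero_iff_of_nonneg_ae hφae hφint).1 h0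
    have hφ0 : ∀ z ∈ interior Δ, φ z = 0 := by
      intro z₀ hz₀
      by_contra hne
      have hpos : 0 < φ z₀ := (hφ_nonneg z₀ hz₀).lt_of_ne (Ne.symm hne)
      have hca : ContinuousAt φ z₀ :=
        hφcont.continuousAt (Filter.mem_of_superset (isOpen_interior.mem_nhds hz₀) interior_subset)
      have hV : φ ⁻¹' Set.Ioi 0 ∩ interior Δ ∈ nhds z₀ :=
        Filter.inter_mem (hca.preimage_mem_nhds (Ioi_mem_nhds hpos))
          (isOpen_interior.mem_nhds hz₀)
      rcases mem_nhds_iff.1 hV with ⟨O, hOsub, hOopen, hz₀O⟩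
      have h1 : volume.restrict Δ {z | φ z ≠ 0} = 0 := by
        have := ae_iff.1 hae0
        simpa using this
      have h2 : volume ({z | φ z ≠ 0} ∩ Δ) = 0 := by
        rwa [Measure.restrict_apply' hΔmeas] at h1
      have hsub : O ⊆ {z | φ z ≠ 0} ∩ Δ := by
        intro w hw
        rcases hOsub hw with ⟨hw1, hw2⟩
        exact ⟨ne_of_gt hw1, interior_subset hw2⟩
      have hpos' : 0 < volume O := hOopen.measure_pos volume ⟨z₀, hz₀O⟩
      exact absurd ((measure_mono hsub).trans h2.le) (not_le.2 hpos')
    have hA0 : ∀ z ∈ interior Δ, A z = 0 := by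
      intro z hz
      have hmul := hφ0 z hz
      simp only [hφ_def] at hmul
      have hsum : (∑ r, ∑ s, H z r s * fderiv ℝ (fderiv ℝ f) z (Pi.single r 1) (Pi.single s 1)) = 0 := by
        rcases mul_eq_zero.1 hmul with h | h
        · exact h
        · exact absurd h (ne_of_gt (hppos z hz))
      exact pair_eq_zero (hHpd z hz) (hApsd z hz) hsum
    have hB0 : ∀ z ∈ interior Δ, fderiv ℝ (fderiv ℝ f) z = 0 := by
      intro z hz
      ext x y
      rw [clm2_expand]
      simp only [ContinuousLinearMap.zero_apply]
      refine Finset.sum_eq_zero fun r _ => Finset.sum_eq_zero fun s _ => ?_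
      have : A z r s = 0 := by rw [hA0 z hz]; rfl
      rw [hAentry] at this
      rw [this, mul_zero]
    obtain ⟨z₀, hz₀⟩ := hΔint
    set L : (Fin ℓ → ℝ) →L[ℝ] ℝ := fderiv ℝ f z₀ with hL_def
    have hconstF : ∀ z ∈ interior Δ, fderiv ℝ f z = L := by
      intro z hz
      exact hΔconv.interior.is_const_of_fderivWithin_eq_zero hdF.differentiableOn
        (fun x hx => by rw [fderivWithin_of_isOpen isOpen_interior hx]; exact hB0 x hx) hz hz₀
    have haffine : ∀ z ∈ interior Δ, f z = L z + (f z₀ - L z₀) := by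
      have hsub : ∀ x ∈ interior Δ,
          fderivWithin ℝ (fun w => f w - L w) (interior Δ) x = 0 := by
        intro x hx
        rw [fderivWithin_of_isOpen isOpen_interior hx,
          fderiv_fun_sub (hdf x) L.differentiableAt, L.fderiv, hconstF x hx, sub_self]
      intro z hz
      have := hΔconv.interior.is_const_of_fderivWithin_eq_zero
        ((hdf.sub L.differentiable).differentiableOn) hsub hz hz₀
      simp only [Pi.sub_apply] at this
      linarith [this]
    refine ⟨{ toFun := fun z => L z + (f z₀ - L z₀),
              linear := (L : (Fin ℓ → ℝ) →ₗ[ℝ] ℝ),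
              map_vadd' := by
                intro q w
                simp only [vadd_eq_add, ContinuousLinearMap.coe_coe, _root_.map_add]
                ring }, ?_⟩
    intro z hzΔ
    have heqOn : Set.EqOn f (fun z => L z + (f z₀ - L z₀)) (closure (interior Δ)) :=
      Set.EqOn.closure (fun w hw => haffine w hw) hf.continuous
        (L.continuous.add continuous_const)
    exact heqOn (mem_closure_interior_of_convex hΔconv hz₀ hzΔ)
  · -- affine implies equality
    rintro ⟨g, hg⟩
    set L' : (Fin ℓ → ℝ) →L[ℝ] ℝ := LinearMap.toContinuousLinearMap g.linear with hL'_def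
    have hgfun : ∀ w, g w = L' w + g 0 := by
      intro w
      have := AffineMap.decomp g
      have h1 : g w = g.linear w + g 0 := by
        conv_lhs => rw [this]
        simp
      rw [h1, hL'_def, LinearMap.coe_toContinuousLinearMap']
    have hfderiv : ∀ z ∈ interior Δ, fderiv ℝ f z = L' := by
      intro z hz
      have hev : f =ᶠ[nhds z] fun w => L' w + g 0 := by
        filter_upwards [isOpen_interior.mem_nhds hz] with w hw
        rw [hg w (interior_subset hw), hgfun w]
      rw [hev.fderiv_eq, (L'.hasFDerivAt.add_const (g 0)).fderiv]
    have hD2zero : ∀ z ∈ interior Δ, ∀ r s : Fin ℓ,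
        fderiv ℝ (fderiv ℝ f) z (Pi.single r 1) (Pi.single s 1) = 0 := by
      intro z hz r s
      have hev : (fderiv ℝ f) =ᶠ[nhds z] fun _ => L' := by
        filter_upwards [isOpen_interior.mem_nhds hz] with w hw
        exact hfderiv w hw
      rw [hev.fderiv_eq, fderiv_fun_const]
      simp
    have hφzero : ∀ z ∈ interior Δ, φ z = 0 := by
      intro z hz
      simp only [hφ_def]
      have : (∑ r, ∑ s, H z r s * fderiv ℝ (fderiv ℝ f) z (Pi.single r 1) (Pi.single s 1)) = 0 :=
        Finset.sum_eq_zero fun r _ => Finset.sum_eq_zero fun s _ => by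
          rw [hD2zero z hz r s, mul_zero]
      rw [this, zero_mul]
    have : φ =ᵐ[volume.restrict Δ] 0 := by
      filter_upwards [hae_int] with z hz using hφzero z hz
    calc ∫ z in Δ, φ z = ∫ z in Δ, (0 : ℝ) := integral_congr_ae this
      _ = 0 := integral_zero _ _
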